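/- Any two finite symplectic modules (A, φ) and (A', φ') are isometric if and only if A and A' are isomorphic as abelian groups. -/

import Mathlib

set_option linter.unusedSectionVars false
set_option maxHeartbeats 1000000

namespace SympAux

variable {n : ℕ} [NeZero n] {M : Type*} [AddCommGroup M]

lemma natCast_val_smul (x : M) (hx : n • x = 0) (m : ℕ) :
    ((m : ZMod n)).val • x = m • x := by
  rw [ZMod.val_natCast]
  conv_rhs => rw [← Nat.mod_add_div m n]
  rw [add_nsmul, mul_nsmul, hx, smul_zero, add_zero]

lemma val_add_smul (x : M) (hx : n • x = 0) (k l : ZMod n) :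
    (k + l).val • x = k.val • x + l.val • x := by
  have h : ((k.val + l.val : ℕ) : ZMod n) = k + l := by
    push_cast
    rw [ZMod.natCast_rightInverse k, ZMod.natCast_rightInverse l]
  rw [← h, natCast_val_smul x hx, add_nsmul]

lemma val_neg_smul (x : M) (hx : n • x = 0) (k : ZMod n) :
    (-k).val • x = -(k.val • x) := by
  have := val_add_smul x hx k (-k)
  rw [add_neg_cancel, ZMod.val_zero, zero_nsmul] at this
  rw [eq_neg_iff_add_eq_zero, add_comm, ← this]

lemma val_nsmul_smul (x : M) (hx : n • x = 0) (m : ℕ) (k : ZMod n) :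
    (m • k).val • x = m • (k.val • x) := by
  induction m with
  | zero => simp
  | succ m ih => rw [succ_nsmul, succ_nsmul, val_add_smul x hx, ih]

lemma val_zsmul_smul (x : M) (hx : n • x = 0) (m : ℤ) (k : ZMod n) :
    (m • k).val • x = m • (k.val • x) := by
  induction m using Int.rec with
  | ofNat m => simpa using val_nsmul_smul x hx m k
  | negSucc m =>
      rw [Int.negSucc_eq, neg_smul, neg_smul, val_neg_smul x hx]
      congr 1
      have := val_nsmul_smul x hx (m+1) k
      rw [show ((m:ℤ)+1) • k.val • x = ((m+1:ℕ):ℤ) • k.val • x by push_cast; ring_nf,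
        natCast_zsmul]
      simpa using this

lemma intCast_val_smul (x : M) (hx : n • x = 0) (m : ℤ) :
    ((m : ZMod n)).val • x = m • x := by
  have : (m : ZMod n) = m • (1 : ZMod n) := by simp
  rw [this, val_zsmul_smul x hx]
  have h1 : ((1 : ZMod n)).val • x = (1 : ℤ) • x := by
    rcases eq_or_lt_of_le (Nat.one_le_iff_ne_zero.2 (NeZero.ne n)) with h | h
    · have hx1 : x = 0 := by simpa [← h] using hx
      simp [hx1]
    · rw [ZMod.val_one_eq_one_mod]
      simp [Nat.mod_eq_of_lt h]
  rw [h1, smul_comm]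
  simp

/-- Torsion-count transfer along an `AddEquiv`. -/
lemma tors_congr {P Q : Type*} [AddCommGroup P] [AddCommGroup Q] (e : P ≃+ Q) (m : ℕ) :
    Nat.card {x : P // m • x = 0} = Nat.card {x : Q // m • x = 0} := by
  apply Nat.card_congr
  refine Equiv.subtypeEquiv e.toEquiv (fun x => ?_)
  constructor
  · intro h; simp only [AddEquiv.toEquiv_eq_coe, EquivLike.coe_coe, ← map_nsmul, h, map_zero]
  · intro h
    apply e.injective
    simpa [map_nsmul] using h

lemma tors_prod {P Q : Type*} [AddCommGroup P] [AddCommGroup Q] (m : ℕ) :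
    Nat.card {x : P × Q // m • x = 0}
      = Nat.card {x : P // m • x = 0} * Nat.card {x : Q // m • x = 0} := by
  rw [← Nat.card_prod]
  apply Nat.card_congr
  refine (Equiv.subtypeEquivRight (fun x => ?_)).trans (Equiv.subtypeProdEquivProd)
  constructor
  · intro h; exact ⟨congrArg Prod.fst h, congrArg Prod.snd h⟩
  · intro h; exact Prod.ext h.1 h.2


section decomp

universe u

/-- The standard element of order `n` in `ℚ/ℤ`. -/
noncomputable def rq (n : ℕ) : AddCircle (1 : ℚ) := (((n : ℚ)⁻¹ : ℚ) : AddCircle (1 : ℚ))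

lemma rq_addOrderOf {n : ℕ} (hn : 0 < n) : addOrderOf (rq n) = n := by
  have := AddCircle.addOrderOf_div_of_gcd_eq_one (p := (1 : ℚ)) (m := 1) (n := n) hn (by simp)
  simpa [rq, one_div] using this

lemma rq_nsmul_self {n : ℕ} (hn : 0 < n) : n • rq n = 0 := by
  rw [← addOrderOf_dvd_iff_nsmul_eq_zero, rq_addOrderOf hn]

lemma rq_inj {n : ℕ} [NeZero n] {k l : ZMod n} (h : k.val • rq n = l.val • rq n) : k = l := by
  have hn : 0 < n := Nat.pos_of_ne_zero (NeZero.ne n)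
  have h0 : (k - l).val • rq n = 0 := by
    have := val_add_smul (rq n) (rq_nsmul_self hn) (k - l) l
    rw [sub_add_cancel, h] at this
    rw [eq_comm, ← sub_eq_zero] at this
    rw [← this]
    abel
  have hdvd : addOrderOf (rq n) ∣ (k - l).val := addOrderOf_dvd_of_nsmul_eq_zero h0
  rw [rq_addOrderOf hn] at hdvd
  have hlt : (k - l).val < n := ZMod.val_lt _
  have hv : (k - l).val = 0 := by
    rcases hdvd with ⟨c, hc⟩
    rcases Nat.eq_zero_or_pos c with rfl | hcpos
    · simpa using hc
    · have : n ≤ n * c := Nat.le_mul_of_pos_right n hcpos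
      omega
  have hkl : k - l = 0 := by
    rwa [ZMod.val_eq_zero] at hv
  rw [← sub_eq_zero]
  exact hkl

lemma rq_surj {n : ℕ} [NeZero n] (z : AddCircle (1 : ℚ)) (hz : n • z = 0) :
    ∃ k : ZMod n, k.val • rq n = z := by
  have hn : 0 < n := Nat.pos_of_ne_zero (NeZero.ne n)
  obtain ⟨q, rfl⟩ := QuotientAddGroup.mk_surjective z
  rw [← AddCircle.coe_nsmul, AddCircle.coe_eq_zero_iff] at hz
  obtain ⟨m, hm⟩ := hz
  refine ⟨(m : ZMod n), ?_⟩
  rw [intCast_val_smul (rq n) (rq_nsmul_self hn) m]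
  have hq : q = (m : ℚ) / n := by
    have : (n : ℚ) * q = (m : ℚ) := by
      have := hm.symm
      push_cast at this ⊢
      simpa [nsmul_eq_mul, zsmul_eq_mul] using this
    field_simp
    linarith
  rw [hq, rq, ← AddCircle.coe_zsmul]
  congr 1

end decomp


section maindecomp

universe u

lemma decomp {A : Type u} [AddCommGroup A] [Fintype A]
    (n : ℕ) (hnval : n = AddMonoid.exponent A)
    (φ : A → A → AddCircle (1 : ℚ))
    (hL : ∀ a b c : A, φ (a + b) c = φ a c + φ b c)
    (hR : ∀ a b c : A, φ a (b + c) = φ a b + φ a c)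
    (halt : ∀ a : A, φ a a = 0)
    (hnd : ∀ a : A, (∀ b : A, φ a b = 0) → a = 0)
    (hA : 1 < Nat.card A) :
    ∃ (C : AddSubgroup A)
      (E : A ≃+ (ZMod n × ZMod n) × C),
      Nat.card C < Nat.card A ∧
      (∀ x : C, (∀ y : C, φ x y = 0) → x = 0) ∧
      (∀ x y : A, φ x y = φ ((E x).2 : A) ((E y).2 : A)
        + ((E x).1.1.val • ((E y).1.2.val • rq n)
        - (E x).1.2.val • ((E y).1.1.val • rq n))) := by
  classical
  subst hnval
  set n := AddMonoid.exponent A with hndef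
  have hcard1 : 1 < Fintype.card A := by rwa [Nat.card_eq_fintype_card] at hA
  haveI : Nontrivial A := Fintype.one_lt_card_iff_nontrivial.mp hcard1
  have hnpos : 0 < n := AddMonoid.ExponentExists.of_finite.exponent_pos
  haveI : NeZero n := ⟨hnpos.ne'⟩
  have htor : ∀ x : A, n • x = 0 := fun x => AddMonoid.exponent_nsmul_eq_zero x
  have hn1 : 1 < n := by
    rcases Nat.lt_or_ge 1 n with h | h
    · exact h
    · exfalso
      obtain ⟨x, y, hxy⟩ := exists_pair_ne A
      have hx := htor x; have hy := htor y
      have hone : n = 1 := by omega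
      rw [hone, one_nsmul] at hx hy
      exact hxy (hx.trans hy.symm)
  haveI : Fact (1 < n) := ⟨hn1⟩
  set r := rq n with hrdef
  have hnr : n • r = 0 := rq_nsmul_self hnpos
  have hrne : r ≠ 0 := by
    intro h
    have := rq_addOrderOf hnpos
    rw [← hrdef, h, addOrderOf_zero] at this
    omega
  -- bilinearity helpers
  have hR0 : ∀ t : A, φ t 0 = 0 := fun t => by
    have := hR t 0 0; rw [add_zero] at this; exact (left_eq_add.mp this)
  have hL0 : ∀ t : A, φ 0 t = 0 := fun t => by
    have := hL 0 0 t; rw [add_zero] at this; exact (left_eq_add.mp this)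
  have hRneg : ∀ t x : A, φ t (-x) = -φ t x := fun t x => by
    have := hR t x (-x); rw [add_neg_cancel, hR0] at this
    rw [eq_neg_iff_add_eq_zero, add_comm, ← this]
  have hLneg : ∀ t x : A, φ (-x) t = -φ x t := fun t x => by
    have := hL x (-x) t; rw [add_neg_cancel, hL0] at this
    rw [eq_neg_iff_add_eq_zero, add_comm, ← this]
  have hRsub : ∀ t x y : A, φ t (x - y) = φ t x - φ t y := fun t x y => by
    rw [sub_eq_add_neg, hR, hRneg, sub_eq_add_neg]
  have hLsub : ∀ t x y : A, φ (x - y) t = φ x t - φ y t := fun t x y => by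
    rw [sub_eq_add_neg, hL, hLneg, sub_eq_add_neg]
  have hRsmul : ∀ t (m : ℕ) (x : A), φ t (m • x) = m • φ t x := by
    intro t m x
    induction m with
    | zero => simpa using hR0 t
    | succ m ih => rw [succ_nsmul, succ_nsmul, hR, ih]
  have hLsmul : ∀ t (m : ℕ) (x : A), φ (m • x) t = m • φ x t := by
    intro t m x
    induction m with
    | zero => simpa using hL0 t
    | succ m ih => rw [succ_nsmul, succ_nsmul, hL, ih]
  have hRzsmul : ∀ t (m : ℤ) (x : A), φ t (m • x) = m • φ t x := by
    intro t m x
    induction m using Int.rec with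
    | ofNat m => simpa using hRsmul t m x
    | negSucc m =>
        rw [Int.negSucc_eq, neg_smul, neg_smul, hRneg]
        congr 1
        rw [show ((m:ℤ)+1) • x = ((m+1:ℕ):ℤ) • x by push_cast; ring_nf, natCast_zsmul,
          show ((m:ℤ)+1) • φ t x = ((m+1:ℕ):ℤ) • φ t x by push_cast; ring_nf, natCast_zsmul]
        exact hRsmul t (m+1) x
  have hskew : ∀ x y : A, φ y x = -φ x y := by
    intro x y
    have h := halt (x + y)
    rw [hL, hR, hR, halt, halt, zero_add, add_zero] at h
    rw [eq_neg_iff_add_eq_zero, add_comm, h]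
  -- element of maximal order
  obtain ⟨a, ha⟩ := AddMonoid.exists_addOrderOf_eq_exponent
    (AddMonoid.ExponentExists.of_finite (G := A))
  rw [← hndef] at ha
  -- the "coordinate" functions
  have hUex : ∀ t x : A, ∃ k : ZMod n, k.val • r = φ t x := by
    intro t x
    apply rq_surj
    rw [← hRsmul, htor, hR0]
  choose U hU using hUex
  have hUadd : ∀ t x y : A, U t (x + y) = U t x + U t y := by
    intro t x y
    apply rq_inj (n := n)
    rw [hU, val_add_smul _ hnr, hU, hU, hR]
  have hUzsmul : ∀ t (m : ℤ) (x : A), U t (m • x) = m • U t x := by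
    intro t m x
    apply rq_inj (n := n)
    rw [hU, val_zsmul_smul _ hnr, hU, hRzsmul]
  -- find hyperbolic partner b with φ a b = r
  let UaH : A →+ ZMod n := AddMonoidHom.mk' (U a) (hUadd a)
  obtain ⟨g, hg⟩ := IsAddCyclic.exists_generator (α := UaH.range)
  obtain ⟨b0, hb0⟩ : ∃ x : A, U a x = (g : ZMod n) := by
    obtain ⟨x, hx⟩ := g.2
    exact ⟨x, hx⟩
  have hgen : ∀ x : A, ∃ m : ℤ, m • (U a b0) = U a x := by
    intro x
    obtain ⟨m, hm⟩ := hg ⟨U a x, ⟨x, rfl⟩⟩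
    refine ⟨m, ?_⟩
    have := congrArg (Subtype.val) hm
    simpa [hb0] using this
  have hDtor : ∀ x : A, addOrderOf (U a b0) • U a x = 0 := by
    intro x
    obtain ⟨m, hm⟩ := hgen x
    rw [← hm, smul_comm, addOrderOf_nsmul_eq_zero, smul_zero]
  have hDa : addOrderOf (U a b0) • a = 0 := by
    apply hnd
    intro x
    have h2 : φ (addOrderOf (U a b0) • a) x = addOrderOf (U a b0) • φ a x := hLsmul x _ a
    rw [h2, ← hU a x, ← val_nsmul_smul _ hnr, hDtor, ZMod.val_zero, zero_nsmul]
  have hnD : n ∣ addOrderOf (U a b0) := by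
    have h3 := addOrderOf_dvd_of_nsmul_eq_zero hDa
    rwa [ha] at h3
  have hDn : addOrderOf (U a b0) ∣ n := by
    have := addOrderOf_dvd_card (x := U a b0)
    rwa [ZMod.card] at this
  have hDeq : addOrderOf (U a b0) = n := Nat.dvd_antisymm hDn hnD
  have h1mem : (1 : ZMod n) ∈ AddSubgroup.zmultiples (U a b0) := by
    have hcards : Nat.card (AddSubgroup.zmultiples (U a b0)) = Nat.card (ZMod n) := by
      rw [Nat.card_zmultiples, hDeq, Nat.card_zmod]
    rw [AddSubgroup.eq_top_of_card_eq _ hcards]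
    trivial
  obtain ⟨mb, hmb⟩ := h1mem
  set b := mb • b0 with hbdef
  have hUab : U a b = 1 := by
    rw [hbdef, hUzsmul]
    simpa using hmb
  have hab : φ a b = r := by
    rw [← hU a b, hUab, ZMod.val_one, one_nsmul]
  have hba : φ b a = -r := by rw [hskew, hab]
  -- the orthogonal complement of the hyperbolic plane spanned by a, b
  set cmap : A → A := fun x => x + (U b x).val • a - (U a x).val • b with hcmap
  have hcm_a : ∀ x : A, φ a (cmap x) = 0 := by
    intro x
    rw [hcmap]
    simp only []
    rw [hRsub, hR, hRsmul, hRsmul, halt, hab, smul_zero, add_zero, hU, sub_self]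
  have hcm_b : ∀ x : A, φ b (cmap x) = 0 := by
    intro x
    rw [hcmap]
    simp only []
    rw [hRsub, hR, hRsmul, hRsmul, halt, hba, smul_zero]
    rw [show (U b x).val • (-r) = -((U b x).val • r) by rw [smul_neg], hU]
    abel
  set C : AddSubgroup A :=
    { carrier := {x | φ a x = 0 ∧ φ b x = 0}
      add_mem' := fun {x y} hx hy => by
        refine ⟨?_, ?_⟩ <;> rw [hR]
        · rw [hx.1, hy.1, add_zero]
        · rw [hx.2, hy.2, add_zero]
      zero_mem' := ⟨hR0 a, hR0 b⟩
      neg_mem' := fun {x} hx => by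
        refine ⟨?_, ?_⟩ <;> rw [hRneg]
        · rw [hx.1, neg_zero]
        · rw [hx.2, neg_zero] } with hC
  have hsplit : ∀ x : A, x = cmap x - (U b x).val • a + (U a x).val • b := by
    intro x
    simp only [hcmap]
    abel
  -- the decomposition equivalence
  have hmemC : ∀ x : A, cmap x ∈ C := fun x => ⟨hcm_a x, hcm_b x⟩
  have hCa : ∀ c : A, c ∈ C → φ a c = 0 := fun c hc => hc.1
  have hCb : ∀ c : A, c ∈ C → φ b c = 0 := fun c hc => hc.2
  have htora : n • a = 0 := htor a
  have htorb : n • b = 0 := htor b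
  -- compute U on a combination
  have hUcomb_a : ∀ (p q : ZMod n) (c : A), c ∈ C →
      U a ((c - q.val • a) + p.val • b) = p := by
    intro p q c hc
    apply rq_inj (n := n)
    rw [hU, hR, hRsub, hRsmul, hRsmul, halt, hab, smul_zero, hCa c hc]
    abel
  have hUcomb_b : ∀ (p q : ZMod n) (c : A), c ∈ C →
      U b ((c - q.val • a) + p.val • b) = q := by
    intro p q c hc
    apply rq_inj (n := n)
    rw [hU, hR, hRsub, hRsmul, hRsmul, halt, hba, smul_zero, hCb c hc]
    rw [show q.val • (-r) = -(q.val • r) by rw [smul_neg]]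
    abel
  set E : A ≃+ (ZMod n × ZMod n) × C :=
    { toFun := fun x => ((U a x, U b x), ⟨cmap x, hmemC x⟩)
      invFun := fun p => ((p.2 : A) - (p.1.2).val • a) + (p.1.1).val • b
      left_inv := fun x => by
        simp only [hcmap]
        abel
      right_inv := fun p => by
        obtain ⟨⟨pp, qq⟩, c⟩ := p
        have h1 : U a (((c : A) - qq.val • a) + pp.val • b) = pp := hUcomb_a pp qq c c.2
        have h2 : U b (((c : A) - qq.val • a) + pp.val • b) = qq := hUcomb_b pp qq c c.2
        refine Prod.ext (Prod.ext ?_ ?_) (Subtype.ext ?_)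
        · exact h1
        · exact h2
        · show cmap (((c : A) - qq.val • a) + pp.val • b) = (c : A)
          simp only [hcmap, h1, h2]
          abel
      map_add' := fun x y => by
        refine Prod.ext (Prod.ext ?_ ?_) (Subtype.ext ?_)
        · exact hUadd a x y
        · exact hUadd b x y
        · show cmap (x + y) = cmap x + cmap y
          simp only [hcmap, hUadd, val_add_smul _ htora, val_add_smul _ htorb]
          abel } with hE
  refine ⟨C, E, ?_, ?_, ?_⟩
  · -- cardinality drops
    haveI : Fintype C := Fintype.ofFinite C
    rw [Nat.card_eq_fintype_card, Nat.card_eq_fintype_card]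
    refine Fintype.card_lt_of_injective_of_notMem (Subtype.val : C → A)
      Subtype.val_injective (b := b) ?_
    rw [Subtype.range_coe]
    intro hb
    exact hrne (hab ▸ hb.1)
  · -- nondegeneracy on C
    intro x hx
    have hxa : φ (x : A) a = 0 := by rw [hskew, hCa _ x.2, neg_zero]
    have hxb : φ (x : A) b = 0 := by rw [hskew, hCb _ x.2, neg_zero]
    have hx0 : (x : A) = 0 := by
      apply hnd
      intro z
      rw [hsplit z, hR, hRsub, hRsmul, hRsmul, hxa, hxb, smul_zero, smul_zero]
      have hcz : φ (x : A) (cmap z) = 0 := hx ⟨cmap z, hmemC z⟩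
      rw [hcz]
      abel
    exact Subtype.ext hx0
  · -- the form in coordinates
    intro x y
    have h1 : φ (cmap x) a = 0 := by rw [hskew, hcm_a, neg_zero]
    have h2 : φ (cmap x) b = 0 := by rw [hskew, hcm_b, neg_zero]
    show φ x y = φ (cmap x) (cmap y)
      + ((U a x).val • ((U b y).val • r) - (U b x).val • ((U a y).val • r))
    have e1 : φ a y = (U a y).val • r := (hU a y).symm
    have e2 : φ b y = (U b y).val • r := (hU b y).symm
    have f1 : φ x a = -((U a x).val • r) := by rw [hskew, hU]
    have f2 : φ x b = -((U b x).val • r) := by rw [hskew, hU]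
    simp only [hcmap, hL, hLsub, hLsmul, hR, hRsub, hRsmul, halt, hab, hba,
      e1, e2, f1, f2, smul_zero, smul_neg, neg_neg, smul_smul]
    simp only [smul_zero, add_zero, zero_add]
    rw [Nat.mul_comm ((U b y).val) ((U a x).val), Nat.mul_comm ((U a y).val) ((U b x).val)]
    abel_nf
    simp

end maindecomp

section keysec

universe u v

lemma torsion_card_eq_card {A : Type u} [AddCommGroup A] {m : ℕ}
    (h : ∀ x : A, m • x = 0) : Nat.card {x : A // m • x = 0} = Nat.card A :=
  Nat.card_congr (Equiv.subtypeUnivEquiv h)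

lemma forall_of_torsion_card {A : Type u} [AddCommGroup A] [Fintype A] {m : ℕ}
    (h : Nat.card {x : A // m • x = 0} = Nat.card A) : ∀ x : A, m • x = 0 := by
  classical
  haveI : Fintype {x : A // m • x = 0} := Fintype.ofFinite _
  rw [Nat.card_eq_fintype_card, Nat.card_eq_fintype_card] at h
  have hbij : Function.Bijective (Subtype.val : {x : A // m • x = 0} → A) :=
    (Fintype.bijective_iff_injective_and_card _).2 ⟨Subtype.val_injective, h⟩
  intro x
  obtain ⟨y, rfl⟩ := hbij.2 x
  exact y.2

lemma exponent_eq_of_torsion {A : Type u} {A' : Type v} [AddCommGroup A] [Fintype A]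
    [AddCommGroup A'] [Fintype A']
    (hcard : ∀ m : ℕ, Nat.card {x : A // m • x = 0} = Nat.card {x : A' // m • x = 0}) :
    AddMonoid.exponent A = AddMonoid.exponent A' := by
  have h0 : Nat.card A = Nat.card A' := by
    have := hcard 0
    rwa [torsion_card_eq_card (fun x => zero_nsmul x),
      torsion_card_eq_card (fun x => zero_nsmul x)] at this
  have key : ∀ m : ℕ, AddMonoid.exponent A ∣ m ↔ AddMonoid.exponent A' ∣ m := by
    intro m
    rw [AddMonoid.exponent_dvd_iff_forall_nsmul_eq_zero,
      AddMonoid.exponent_dvd_iff_forall_nsmul_eq_zero]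
    constructor
    · intro h
      apply forall_of_torsion_card
      rw [← hcard, torsion_card_eq_card h, h0]
    · intro h
      apply forall_of_torsion_card
      rw [hcard, torsion_card_eq_card h, h0]
  exact Nat.dvd_antisymm ((key _).2 dvd_rfl) ((key _).1 dvd_rfl)

theorem key : ∀ (N : ℕ) {A : Type u} {A' : Type v} [AddCommGroup A] [Fintype A]
    [AddCommGroup A'] [Fintype A']
    (φ : A → A → AddCircle (1 : ℚ)) (φ' : A' → A' → AddCircle (1 : ℚ)),
    (∀ a b c : A, φ (a + b) c = φ a c + φ b c) →
    (∀ a b c : A, φ a (b + c) = φ a b + φ a c) →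
    (∀ a : A, φ a a = 0) →
    (∀ a : A, (∀ b : A, φ a b = 0) → a = 0) →
    (∀ a b c : A', φ' (a + b) c = φ' a c + φ' b c) →
    (∀ a b c : A', φ' a (b + c) = φ' a b + φ' a c) →
    (∀ a : A', φ' a a = 0) →
    (∀ a : A', (∀ b : A', φ' a b = 0) → a = 0) →
    Nat.card A ≤ N →
    (∀ m : ℕ, Nat.card {x : A // m • x = 0} = Nat.card {x : A' // m • x = 0}) →
    ∃ e : A ≃+ A', ∀ a b : A, φ a b = φ' (e a) (e b) := by
  intro N
  induction N with
  | zero =>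
      intro A A' _ _ _ _ φ φ' hL hR halt hnd hL' hR' halt' hnd' hle hcard
      exfalso
      haveI : Nonempty A := ⟨0⟩
      have : 0 < Nat.card A := Nat.card_pos
      omega
  | succ N ih =>
      intro A A' _ _ _ _ φ φ' hL hR halt hnd hL' hR' halt' hnd' hle hcard
      haveI : Nonempty A := ⟨0⟩
      haveI : Nonempty A' := ⟨0⟩
      have h0 : Nat.card A = Nat.card A' := by
        have := hcard 0
        rwa [torsion_card_eq_card (fun x => zero_nsmul x),
          torsion_card_eq_card (fun x => zero_nsmul x)] at this
      rcases le_or_gt (Nat.card A) 1 with hA1 | hA1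
      · -- trivial case
        have hA : Nat.card A = 1 := le_antisymm hA1 Nat.card_pos
        haveI : Subsingleton A := (Nat.card_eq_one_iff_unique.mp hA).1
        haveI : Subsingleton A' := (Nat.card_eq_one_iff_unique.mp (h0 ▸ hA)).1
        have hz : φ 0 0 = 0 := by
          have := hL 0 0 0
          rw [add_zero] at this
          exact left_eq_add.mp this
        have hz' : φ' 0 0 = 0 := by
          have := hL' 0 0 0
          rw [add_zero] at this
          exact left_eq_add.mp this
        refine ⟨{ toFun := fun _ => 0, invFun := fun _ => 0,
                  left_inv := fun x => Subsingleton.elim _ _,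
                  right_inv := fun x => Subsingleton.elim _ _,
                  map_add' := fun _ _ => (add_zero (0 : A')).symm }, ?_⟩
        intro x y
        have hx : x = 0 := Subsingleton.elim _ _
        have hy : y = 0 := Subsingleton.elim _ _
        rw [hx, hy, hz]
        exact hz'.symm
      · -- main case
        have hexp : AddMonoid.exponent A = AddMonoid.exponent A' :=
          exponent_eq_of_torsion hcard
        set n := AddMonoid.exponent A with hn
        obtain ⟨C, E, hClt, hCnd, hCform⟩ := decomp n rfl φ hL hR halt hnd hA1
        obtain ⟨C', E', hClt', hCnd', hCform'⟩ :=
          decomp n hexp φ' hL' hR' halt' hnd' (h0 ▸ hA1)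
        -- torsion counts agree for the complements
        have hcardC : ∀ m : ℕ,
            Nat.card {x : C // m • x = 0} = Nat.card {x : C' // m • x = 0} := by
          intro m
          have hA := hcard m
          rw [tors_congr E m, tors_congr E' m, tors_prod, tors_prod, tors_prod,
            tors_prod] at hA
          haveI : Nonempty {k : ZMod n // m • k = 0} := ⟨⟨0, smul_zero m⟩⟩
          have hpos : 0 < Nat.card {k : ZMod n // m • k = 0} := Nat.card_pos
          exact Nat.eq_of_mul_eq_mul_left (Nat.mul_pos hpos hpos) hA
        haveI : Fintype C := Fintype.ofFinite _
        haveI : Fintype C' := Fintype.ofFinite _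
        obtain ⟨ε, hε⟩ := ih (fun x y : C => φ x y) (fun x y : C' => φ' x y)
          (fun x y z => by
            show φ ((x + y : C) : A) z = _
            rw [AddSubgroup.coe_add]; exact hL x y z)
          (fun x y z => by
            show φ (x : A) ((y + z : C) : A) = _
            rw [AddSubgroup.coe_add]; exact hR x y z)
          (fun x => halt x) hCnd
          (fun x y z => by
            show φ' ((x + y : C') : A') z = _
            rw [AddSubgroup.coe_add]; exact hL' x y z)
          (fun x y z => by
            show φ' (x : A') ((y + z : C') : A') = _
            rw [AddSubgroup.coe_add]; exact hR' x y z)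
          (fun x => halt' x) hCnd'
          (by
            have := hClt
            omega)
          hcardC
        -- assemble the isometry
        set e : A ≃+ A' :=
          E.trans (((AddEquiv.refl (ZMod n × ZMod n)).prodCongr ε).trans E'.symm) with he
        refine ⟨e, ?_⟩
        intro x y
        have hcoord : ∀ z : A, E' (e z) = ((E z).1, ε (E z).2) := by
          intro z
          rw [he]
          simp only [AddEquiv.trans_apply, AddEquiv.apply_symm_apply]
          rfl
        have hc1 : ∀ z : A, (E' (e z)).1 = (E z).1 := fun z => by rw [hcoord]
        have hc2 : ∀ z : A, (E' (e z)).2 = ε (E z).2 := fun z => by rw [hcoord]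
        rw [hCform x y, hCform' (e x) (e y), hc1, hc1, hc2, hc2]
        rw [hε (E x).2 (E y).2]
  done

end keysec

end SympAux




/-- Two finite symplectic modules are isometric iff their underlying groups are
isomorphic. -/
theorem symplectic_isometric_iff_isomorphic
    {A : Type*} [AddCommGroup A] [Fintype A]
    {A' : Type*} [AddCommGroup A'] [Fintype A']
    (φ : A → A → AddCircle (1 : ℚ)) (φ' : A' → A' → AddCircle (1 : ℚ))
    (hL : ∀ a b c : A, φ (a + b) c = φ a c + φ b c)
    (hR : ∀ a b c : A, φ a (b + c) = φ a b + φ a c)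
    (halt : ∀ a : A, φ a a = 0)
    (hnd : ∀ a : A, (∀ b : A, φ a b = 0) → a = 0)
    (hL' : ∀ a b c : A', φ' (a + b) c = φ' a c + φ' b c)
    (hR' : ∀ a b c : A', φ' a (b + c) = φ' a b + φ' a c)
    (halt' : ∀ a : A', φ' a a = 0)
    (hnd' : ∀ a : A', (∀ b : A', φ' a b = 0) → a = 0) :
    (∃ e : A ≃+ A', ∀ a b : A, φ a b = φ' (e a) (e b)) ↔ Nonempty (A ≃+ A') := by
  constructor
  · rintro ⟨e, -⟩
    exact ⟨e⟩
  · rintro ⟨e0⟩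
    exact SympAux.key (Nat.card A) φ φ' hL hR halt hnd hL' hR' halt' hnd' le_rfl
      (fun m => SympAux.tors_congr e0 m)
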